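/- arXiv:0907.3801 — 2 statements merged into one kernel-verified Lean document; each statement's English description precedes it below -/
import Mathlib

section
/- For every finite graph G, the incidence chromatic number of G is at most the chromatic number of the square of G: χ_i(G) ≤ χ(G²). -/
open SimpleGraph

/-- The type of incidences of a graph `G`: pairs `(v, e)` where `e` is an edge of `G`
incident to the vertex `v`. -/
def Incidence {V : Type*} (G : SimpleGraph V) : Type _ :=
  {p : V × Sym2 V // p.2 ∈ G.edgeSet ∧ p.1 ∈ p.2}

/-- The graph on the incidences of `G` in which two distinct incidences `(v,e)` and `(w,f)`
are adjacent iff `v = w`, or `e = f`, or the edge `vw` equals `e` or `f`. -/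
def incidenceGraph {V : Type*} (G : SimpleGraph V) : SimpleGraph (Incidence G) where
  Adj i j := i ≠ j ∧
    (i.1.1 = j.1.1 ∨ i.1.2 = j.1.2 ∨ s(i.1.1, j.1.1) = i.1.2 ∨ s(i.1.1, j.1.1) = j.1.2)
  symm := by
    refine ⟨?_⟩
    rintro ⟨⟨v, e⟩, hi⟩ ⟨⟨w, f⟩, hj⟩ ⟨hne, h⟩
    refine ⟨fun h' => hne h'.symm, ?_⟩
    simp only at h ⊢
    rcases h with h | h | h | h
    · exact Or.inl h.symm
    · exact Or.inr (Or.inl h.symm)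
    · exact Or.inr (Or.inr (Or.inr ((Sym2.eq_swap).trans h)))
    · exact Or.inr (Or.inr (Or.inl ((Sym2.eq_swap).trans h)))
  loopless := ⟨fun i h => h.1 rfl⟩

/-- The incidence chromatic number of a graph: the least number of colors in a proper
coloring of its incidences. -/
noncomputable def incidenceChromaticNumber {V : Type*} (G : SimpleGraph V) : ℕ∞ :=
  (incidenceGraph G).chromaticNumber

/-- The square of a graph `G`: distinct vertices are adjacent iff they are at distance
at most 2 in `G`. -/
def SimpleGraph.square {V : Type*} (G : SimpleGraph V) : SimpleGraph V where
  Adj u v := u ≠ v ∧ (G.Adj u v ∨ ∃ w, G.Adj u w ∧ G.Adj w v)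
  symm := by
    refine ⟨?_⟩
    rintro u v ⟨hne, h | ⟨w, h1, h2⟩⟩
    · exact ⟨hne.symm, Or.inl h.symm⟩
    · exact ⟨hne.symm, Or.inr ⟨w, h2.symm, h1.symm⟩⟩
  loopless := ⟨fun v h => h.1 rfl⟩

/-- The toroidal grid `T_{m,n} = C_m □ C_n`. -/
def toroidalGrid (m n : ℕ) : SimpleGraph (Fin m × Fin n) :=
  SimpleGraph.boxProd (SimpleGraph.cycleGraph m) (SimpleGraph.cycleGraph n)

theorem incidence_chromatic_le_chromatic_square {V : Type*} [Fintype V]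
    (G : SimpleGraph V) :
    incidenceChromaticNumber G ≤ G.square.chromaticNumber := by
  apply SimpleGraph.chromaticNumber_le_of_forall_imp
  rintro n ⟨c⟩
  constructor
  refine SimpleGraph.Coloring.mk (fun i => c (Sym2.Mem.other i.2.2)) ?_
  rintro ⟨⟨v, e⟩, he, hve⟩ ⟨⟨w, f⟩, hf, hwf⟩ ⟨hne, hadj⟩
  simp only at hadj
  set u := Sym2.Mem.other hve with hu
  set x := Sym2.Mem.other hwf with hx
  have hsu : s(v, u) = e := Sym2.other_spec hve
  have hsx : s(w, x) = f := Sym2.other_spec hwf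
  have hvu : G.Adj v u := G.mem_edgeSet.mp (hsu ▸ he)
  have hwx : G.Adj w x := G.mem_edgeSet.mp (hsx ▸ hf)
  intro hcol
  apply c.valid _ hcol
  show G.square.Adj u x
  rcases hadj with h | h | h | h
  · subst h
    have hux : u ≠ x := by
      intro h'
      refine hne (Subtype.ext ?_)
      show (v, e) = (v, f)
      rw [← hsx, ← h', hsu]
    exact ⟨hux, Or.inr ⟨v, hvu.symm, hwx⟩⟩
  · have := hsu.trans (h ▸ hsx.symm)
    rcases Sym2.eq_iff.mp this with ⟨hv, hux⟩ | ⟨hvx, huw⟩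
    · refine absurd (Subtype.ext ?_) hne
      show (v, e) = (w, f)
      rw [hv, h]
    · have hvw : G.Adj v w := huw ▸ hvu
      rw [huw, ← hvx]
      exact ⟨hvw.ne', Or.inl hvw.symm⟩
  · rcases Sym2.eq_iff.mp (h.trans hsu.symm) with ⟨-, hwu⟩ | ⟨hvu', -⟩
    · rw [← hwu]
      exact ⟨hwx.ne, Or.inl hwx⟩
    · exact absurd hvu' hvu.ne
  · rcases Sym2.eq_iff.mp (h.trans hsx.symm) with ⟨hvw, hwx'⟩ | ⟨hvx, -⟩
    · exact absurd hwx' hwx.ne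
    · rw [← hvx]
      exact ⟨hvu.ne', Or.inl hvu.symm⟩
end

section
/- For every integer k ≥ 1 and every integer n ≥ 5 with n ≠ 7, the chromatic number of the square of the toroidal grid satisfies χ(T_{5k,n}²) ≤ 6. -/
open SimpleGraph

namespace TGAux


abbrev Col := ZMod 5 → Fin 6

def mkC (c0 c1 c2 c3 c4 : Fin 6) : Col := fun a => [c0,c1,c2,c3,c4].getD a.val c0

def sh (s : ZMod 5) : Col := fun a => ⟨(a+s).val, lt_of_lt_of_le (ZMod.val_lt _) (by norm_num)⟩

def P2c (c d : Col) : Prop := ∀ a b : ZMod 5, (b = a ∨ b = a + 1 ∨ b = a - 1) → c a ≠ d b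
def P3c (c d : Col) : Prop := ∀ a : ZMod 5, c a ≠ d a

instance (c d : Col) : Decidable (P2c c d) := by unfold P2c; infer_instance
instance (c d : Col) : Decidable (P3c c d) := by unfold P3c; infer_instance

def OkSeq (n : ℕ) (f : ℕ → Col) : Prop :=
  ∀ j < n, Function.Injective (f j) ∧ P2c (f j) (f ((j+1) % n)) ∧ P3c (f j) (f ((j+2) % n))

instance (n : ℕ) (f : ℕ → Col) : Decidable (OkSeq n f) := by unfold OkSeq; infer_instance

lemma shInj : ∀ s : ZMod 5, Function.Injective (sh s) := by decide
lemma shP2 : ∀ s : ZMod 5, P2c (sh s) (sh (s+2)) := by decide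
lemma shP3 : ∀ s s' : ZMod 5, s ≠ s' → P3c (sh s) (sh s') := by decide

def GoodBlock (p : ℕ) (B : ℕ → Col) (t : ZMod 5) : Prop :=
  B 0 = sh 0 ∧ B 1 = sh 2 ∧
  (∀ j < p, Function.Injective (B j) ∧ (j+1 < p → P2c (B j) (B (j+1))) ∧
    (j+2 < p → P3c (B j) (B (j+2)))) ∧
  P2c (B (p-1)) (sh t) ∧ P3c (B (p-2)) (sh t) ∧ P3c (B (p-1)) (sh (t+2))

instance (p : ℕ) (B : ℕ → Col) (t : ZMod 5) : Decidable (GoodBlock p B t) := by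
  unfold GoodBlock; infer_instance

def masterF (p : ℕ) (B : ℕ → Col) (t : ZMod 5) : ℕ → Col :=
  fun j => if j < p then B j else sh (t + 2 * ((j - p : ℕ) : ZMod 5))

theorem master {p q n : ℕ} (hp : 5 ≤ p) (hq : 2 ≤ q) (hn : n = p + q)
    {B : ℕ → Col} {t : ZMod 5} (htq : t + 2 * (q : ZMod 5) = 0)
    (hB : GoodBlock p B t) : OkSeq n (masterF p B t) := by
  obtain ⟨hB0, hB1, hI, hE1, hE2, hE3⟩ := hB
  have hq1 : ((q - 1 : ℕ) : ZMod 5) = (q : ZMod 5) - 1 := by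
    rw [Nat.cast_sub (by omega)]; norm_num
  have hq2 : ((q - 2 : ℕ) : ZMod 5) = (q : ZMod 5) - 2 := by
    rw [Nat.cast_sub (by omega)]; norm_num
  intro j hj
  refine ⟨?_, ?_, ?_⟩
  · -- injectivity
    unfold masterF
    by_cases hjp : j < p
    · simpa [hjp] using (hI j hjp).1
    · simpa [hjp] using shInj _
  · -- P2
    rcases lt_trichotomy (j+1) p with h1 | h1 | h1
    · have hjp : j < p := by omega
      have : (j+1) % n = j + 1 := Nat.mod_eq_of_lt (by omega)
      rw [this]
      simpa [masterF, hjp, h1] using (hI j hjp).2.1 h1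
    · obtain rfl : j = p - 1 := by omega
      have hpn : (p - 1 + 1) % n = p := by
        have : p - 1 + 1 = p := by omega
        rw [this, Nat.mod_eq_of_lt (by omega)]
      rw [hpn]
      have h2 : ¬ (p < p) := by omega
      have h3 : p - 1 < p := by omega
      simpa [masterF, h2, h3] using hE1
    · -- j ≥ p
      have hjp : ¬ (j < p) := by omega
      rcases lt_or_ge (j+1) n with h2 | h2
      · -- both shift
        have : (j+1) % n = j + 1 := Nat.mod_eq_of_lt h2
        rw [this]
        have h3 : ¬ (j + 1 < p) := by omega
        have hc : ((j + 1 - p : ℕ) : ZMod 5) = ((j - p : ℕ) : ZMod 5) + 1 := by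
          have : j + 1 - p = (j - p) + 1 := by omega
          rw [this]; push_cast; ring
        simp only [masterF, hjp, h3, if_neg, if_false]
        rw [hc]
        have := shP2 (t + 2 * ((j - p : ℕ) : ZMod 5))
        convert this using 2
        ring
      · -- wrap : j = n - 1
        obtain rfl : j = n - 1 := by omega
        have : (n - 1 + 1) % n = 0 := by
          have : n - 1 + 1 = n := by omega
          rw [this, Nat.mod_self]
        rw [this]
        have h0 : (0 : ℕ) < p := by omega
        have hd : n - 1 - p = q - 1 := by omega
        simp only [masterF, hjp, if_neg, if_false, if_pos h0, hB0, hd]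
        have hs : t + 2 * ((q - 1 : ℕ) : ZMod 5) + 2 = 0 := by
          rw [hq1]; ring_nf; linear_combination htq
        have := shP2 (t + 2 * ((q - 1 : ℕ) : ZMod 5))
        rwa [hs] at this
  · -- P3
    rcases lt_trichotomy (j+2) p with h1 | h1 | h1
    · have hjp : j < p := by omega
      have : (j+2) % n = j + 2 := Nat.mod_eq_of_lt (by omega)
      rw [this]
      simpa [masterF, hjp, h1] using (hI j hjp).2.2 h1
    · obtain rfl : j = p - 2 := by omega
      have hpn : (p - 2 + 2) % n = p := by
        have : p - 2 + 2 = p := by omega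
        rw [this, Nat.mod_eq_of_lt (by omega)]
      rw [hpn]
      have h2 : ¬ (p < p) := by omega
      have h3 : p - 2 < p := by omega
      simpa [masterF, h2, h3] using hE2
    · rcases lt_or_ge j p with h4 | h4
      · -- j = p - 1, target p + 1
        obtain rfl : j = p - 1 := by omega
        have hpn : (p - 1 + 2) % n = p + 1 := by
          have : p - 1 + 2 = p + 1 := by omega
          rw [this, Nat.mod_eq_of_lt (by omega)]
        rw [hpn]
        have h2 : ¬ (p + 1 < p) := by omega
        have h3 : p - 1 < p := by omega
        have h5 : p + 1 - p = 1 := by omega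
        simp only [masterF, if_pos h3, h2, if_neg, if_false, h5]
        simpa using hE3
      · -- j ≥ p
        have hjp : ¬ (j < p) := by omega
        rcases lt_or_ge (j+2) n with h2 | h2
        · have : (j+2) % n = j + 2 := Nat.mod_eq_of_lt h2
          rw [this]
          have h3 : ¬ (j + 2 < p) := by omega
          have hc : ((j + 2 - p : ℕ) : ZMod 5) = ((j - p : ℕ) : ZMod 5) + 2 := by
            have : j + 2 - p = (j - p) + 2 := by omega
            rw [this]; push_cast; ring
          simp only [masterF, hjp, h3, if_neg, if_false]
          rw [hc]
          apply shP3
          intro hcon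
          have : (0 : ZMod 5) = 4 := by linear_combination hcon
          exact absurd this (by decide)
        · -- wrap
          rcases lt_or_ge (j + 2) (n + 1) with h5 | h5
          · -- j = n - 2
            obtain rfl : j = n - 2 := by omega
            have : (n - 2 + 2) % n = 0 := by
              have : n - 2 + 2 = n := by omega
              rw [this, Nat.mod_self]
            rw [this]
            have h0 : (0 : ℕ) < p := by omega
            have hd : n - 2 - p = q - 2 := by omega
            simp only [masterF, hjp, if_neg, if_false, if_pos h0, hB0, hd]
            have hs : t + 2 * ((q - 2 : ℕ) : ZMod 5) = 1 := by
              rw [hq2]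
              have h55 : (5:ZMod 5) = 0 := by decide
              linear_combination htq - h55
            rw [hs]
            decide
          · -- j = n - 1
            obtain rfl : j = n - 1 := by omega
            have : (n - 1 + 2) % n = 1 := by
              have h6 : n - 1 + 2 = n + 1 := by omega
              rw [h6, Nat.add_mod_left]
              exact Nat.mod_eq_of_lt (by omega)
            rw [this]
            have h0 : (1 : ℕ) < p := by omega
            have hd : n - 1 - p = q - 1 := by omega
            simp only [masterF, hjp, if_neg, if_false, if_pos h0, hB1, hd]
            have hs : t + 2 * ((q - 1 : ℕ) : ZMod 5) = 3 := by
              rw [hq1]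
              have h55 : (5:ZMod 5) = 0 := by decide
              linear_combination htq - h55
            rw [hs]
            decide


def L5 : ℕ → Col := fun j => [mkC 0 1 2 3 4, mkC 2 3 0 5 1, mkC 4 5 1 2 3, mkC 1 2 3 0 5, mkC 3 4 5 1 2].getD j (mkC 0 1 2 3 4)
def L6 : ℕ → Col := fun j => [mkC 0 1 2 3 4, mkC 2 3 0 5 1, mkC 5 4 1 2 0, mkC 1 0 5 4 3, mkC 4 2 3 1 5, mkC 3 5 4 0 2].getD j (mkC 0 1 2 3 4)
def L8 : ℕ → Col := fun j => [mkC 0 1 2 3 4, mkC 2 3 0 5 1, mkC 5 4 1 2 0, mkC 1 0 5 3 4, mkC 2 3 4 1 5, mkC 4 1 0 2 3, mkC 5 2 3 4 1, mkC 3 4 5 0 2].getD j (mkC 0 1 2 3 4)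
def L9 : ℕ → Col := fun j => [mkC 0 1 2 3 4, mkC 2 3 0 5 1, mkC 4 5 1 2 3, mkC 0 2 3 4 5, mkC 3 1 5 0 2, mkC 5 0 4 3 1, mkC 4 3 1 2 0, mkC 1 2 0 4 5, mkC 3 4 5 1 2].getD j (mkC 0 1 2 3 4)
def L12 : ℕ → Col := fun j => [mkC 0 1 2 3 4, mkC 2 3 0 5 1, mkC 5 4 1 2 0, mkC 1 0 5 3 4, mkC 3 2 4 0 5, mkC 0 5 3 2 1, mkC 2 4 1 5 3, mkC 1 3 2 0 4, mkC 0 5 4 1 2, mkC 4 1 0 5 3, mkC 5 2 3 4 1, mkC 3 4 5 0 2].getD j (mkC 0 1 2 3 4)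
def B5 : ℕ → Col := fun j => [mkC 0 1 2 3 4, mkC 2 3 4 0 1, mkC 4 0 1 2 3, mkC 1 2 3 4 0, mkC 3 4 0 1 2].getD j (mkC 0 1 2 3 4)
def B72 : ℕ → Col := fun j => [mkC 0 1 2 3 4, mkC 2 3 4 0 1, mkC 4 0 1 2 5, mkC 1 2 5 4 3, mkC 5 4 3 1 0, mkC 3 1 0 5 2, mkC 0 5 2 3 4].getD j (mkC 0 1 2 3 4)
def B80 : ℕ → Col := fun j => [mkC 0 1 2 3 4, mkC 2 3 4 0 1, mkC 4 0 1 2 5, mkC 1 2 5 4 0, mkC 5 3 0 1 2, mkC 4 1 2 5 3, mkC 2 5 3 4 0, mkC 3 4 0 1 5].getD j (mkC 0 1 2 3 4)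
def B90 : ℕ → Col := fun j => [mkC 0 1 2 3 4, mkC 2 3 4 0 1, mkC 4 0 1 2 5, mkC 3 2 5 4 0, mkC 1 4 0 3 2, mkC 5 3 2 1 4, mkC 2 0 4 5 3, mkC 1 5 3 2 0, mkC 3 4 0 1 5].getD j (mkC 0 1 2 3 4)
def B14 : ℕ → Col := fun j => [mkC 0 1 2 3 4, mkC 2 3 4 0 1, mkC 4 0 1 2 5, mkC 1 2 5 4 3, mkC 5 4 3 1 0, mkC 3 1 0 5 2, mkC 0 5 2 3 4, mkC 2 3 4 0 1, mkC 4 0 1 2 3, mkC 1 2 3 4 5, mkC 3 4 5 1 0, mkC 5 1 0 3 2, mkC 0 3 2 5 4, mkC 2 5 4 0 1].getD j (mkC 0 1 2 3 4)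


lemma zne : ∀ x y : ZMod 5, (y = x + 1 ∨ x = y + 1 ∨ y = x + 1 + 1 ∨ x = y + 1 + 1) → x ≠ y := by
  decide

lemma fin_adj {m : ℕ} [NeZero m] (hm : 5 ≤ m) {a c : Fin m} (h : (cycleGraph m).Adj a c) :
    c = a + 1 ∨ a = c + 1 := by
  rw [cycleGraph_adj'] at h
  have h1 : (1 : Fin m).val = 1 := by
    rw [Fin.val_one']; exact Nat.mod_eq_of_lt (by omega)
  rcases h with h | h
  · right
    have : a - c = 1 := Fin.val_injective (by rw [h1]; exact h)
    rw [sub_eq_iff_eq_add] at this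
    rw [this, add_comm]
  · left
    have : c - a = 1 := Fin.val_injective (by rw [h1]; exact h)
    rw [sub_eq_iff_eq_add] at this
    rw [this, add_comm]

lemma fin_step_val {m : ℕ} [NeZero m] (hm : 5 ≤ m) (z : Fin m) :
    (z + 1).val = (z.val + 1) % m := by
  rw [Fin.add_def]
  simp only
  rw [Fin.val_one', Nat.mod_eq_of_lt (show 1 < m by omega)]

theorem colorable_of_okSeq (k n : ℕ) (hk : 1 ≤ k) (hn : 5 ≤ n)
    (f : ℕ → Col) (hf : OkSeq n f) :
    (toroidalGrid (5 * k) n).square.chromaticNumber ≤ 6 := by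
  set m := 5 * k with hmdef
  have hm : 5 ≤ m := by omega
  haveI : NeZero m := ⟨by omega⟩
  haveI : NeZero n := ⟨by omega⟩
  have hm0 : ((m : ℕ) : ZMod 5) = 0 := by
    rw [hmdef]; push_cast
    rw [show (5:ZMod 5) = 0 by decide]
    ring
  have hmod : ∀ N : ℕ, ((N % m : ℕ) : ZMod 5) = (N : ZMod 5) := by
    intro N
    conv_rhs => rw [← Nat.div_add_mod N m]
    push_cast
    rw [hm0]; ring
  set φ : Fin m → ZMod 5 := fun z => ((z.val : ℕ) : ZMod 5) with hφ
  have hstep : ∀ z : Fin m, φ (z + 1) = φ z + 1 := by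
    intro z
    simp only [hφ]
    rw [fin_step_val hm z, hmod]
    push_cast; ring
  -- row adjacency in ZMod 5
  have hrow : ∀ a c : Fin m, (cycleGraph m).Adj a c → (φ c = φ a + 1 ∨ φ a = φ c + 1) := by
    intro a c h
    rcases fin_adj hm h with h | h
    · left; rw [h, hstep]
    · right; rw [h, hstep]
  -- column facts
  have hcstep : ∀ z : Fin n, (z + 1).val = (z.val + 1) % n := fin_step_val hn
  have hcstep2 : ∀ z : Fin n, (z + 1 + 1).val = (z.val + 2) % n := by
    intro z
    rw [hcstep, hcstep, Nat.mod_add_mod]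
  -- helper lemmas over ZMod 5
  have relsym : ∀ u v : ZMod 5, (v = u ∨ v = u + 1 ∨ v = u - 1) →
      (u = v ∨ u = v + 1 ∨ u = v - 1) := by decide
  have rel_of_row : ∀ u v : ZMod 5, (v = u + 1 ∨ u = v + 1) →
      (v = u ∨ v = u + 1 ∨ v = u - 1) := by decide
  -- key inequality
  have key : ∀ (a c : Fin m) (b d : Fin n),
      (toroidalGrid m n).square.Adj (a, b) (c, d) → f b.val (φ a) ≠ f d.val (φ c) := by
    rintro a c b d ⟨hne, h⟩
    have hInj := fun (j : Fin n) => (hf j.val j.isLt).1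
    have hP2 := fun (j : Fin n) => (hf j.val j.isLt).2.1
    have hP3 := fun (j : Fin n) => (hf j.val j.isLt).2.2
    -- column helper : one column step
    have hcol2 : ∀ (b' d' : Fin n) (u v : ZMod 5), (cycleGraph n).Adj b' d' →
        (v = u ∨ v = u + 1 ∨ v = u - 1) → f b'.val u ≠ f d'.val v := by
      intro b' d' u v hbd hrel
      rcases fin_adj hn hbd with h' | h'
      · have := hP2 b' u v hrel
        rwa [← hcstep b', ← h'] at this
      · have := hP2 d' v u (relsym _ _ hrel)
        rw [← hcstep d', ← h'] at this
        exact this.symm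
    rcases h with h | ⟨⟨x, y⟩, h1, h2⟩
    · rw [toroidalGrid, boxProd_adj] at h
      dsimp only at h
      rcases h with ⟨hac, rfl⟩ | ⟨hbd, rfl⟩
      · -- row step, same column
        refine (hInj b).ne ?_
        rcases hrow a c hac with h | h
        · exact zne _ _ (Or.inl h)
        · exact zne _ _ (Or.inr (Or.inl h))
      · -- column step, same row
        exact hcol2 b d (φ a) (φ a) hbd (Or.inl rfl)
    · rw [toroidalGrid, boxProd_adj] at h1 h2
      dsimp only at h1 h2
      rcases h1 with ⟨hax, rfl⟩ | ⟨hby, rfl⟩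
      · rcases h2 with ⟨hxc, rfl⟩ | ⟨hyd, rfl⟩
        · -- row, row : same column
          rcases fin_adj hm hax with h3 | h3 <;> rcases fin_adj hm hxc with h4 | h4
          · refine (hInj b).ne (zne _ _ ?_)
            right; right; left; rw [h4, h3, hstep, hstep]
          · exact (hne (by rw [add_right_cancel (h3.symm.trans h4)])).elim
          · exact (hne (by rw [h3.trans h4.symm])).elim
          · refine (hInj b).ne (zne _ _ ?_)
            right; right; right; rw [h3, h4, hstep, hstep]
        · -- row then column ; here c has been substituted by x
          exact hcol2 b d (φ a) (φ x) hyd (rel_of_row _ _ (hrow a x hax))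
      · rcases h2 with ⟨hxc, rfl⟩ | ⟨hyd, rfl⟩
        · -- column then row ; d has been substituted by y
          exact hcol2 b y (φ a) (φ c) hby (rel_of_row _ _ (hrow a c hxc))
        · -- column, column : same row (c substituted by a)
          rcases fin_adj hn hby with h3 | h3 <;> rcases fin_adj hn hyd with h4 | h4
          · have := hP3 b (φ a)
            rwa [← hcstep2 b, ← h3, ← h4] at this
          · exact (hne (by rw [add_right_cancel (h3.symm.trans h4)])).elim
          · exact (hne (by rw [h3.trans h4.symm])).elim
          · have := hP3 d (φ a)
            rw [← hcstep2 d, ← h4, ← h3] at this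
            exact this.symm
  have hcol : (toroidalGrid m n).square.Colorable 6 := by
    have C : (toroidalGrid m n).square.Coloring (Fin 6) :=
      Coloring.mk (fun v => f v.2.val (φ v.1)) (by
        rintro ⟨a, b⟩ ⟨c, d⟩ hadj
        exact key a c b d hadj)
    simpa using C.colorable
  simpa using hcol.chromaticNumber_le


end TGAux

open TGAux in
theorem chromatic_square_toroidal_grid_five_k (k n : ℕ) (hk : 1 ≤ k) (hn : 5 ≤ n)
    (hn7 : n ≠ 7) :
    (toroidalGrid (5 * k) n).square.chromaticNumber ≤ 6 := by
  by_cases h5 : n = 5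
  · exact h5 ▸ colorable_of_okSeq k 5 hk (by norm_num) L5 (by decide)
  by_cases h6 : n = 6
  · exact h6 ▸ colorable_of_okSeq k 6 hk (by norm_num) L6 (by decide)
  by_cases h8 : n = 8
  · exact h8 ▸ colorable_of_okSeq k 8 hk (by norm_num) L8 (by decide)
  by_cases h9 : n = 9
  · exact h9 ▸ colorable_of_okSeq k 9 hk (by norm_num) L9 (by decide)
  by_cases h12 : n = 12
  · exact h12 ▸ colorable_of_okSeq k 12 hk (by norm_num) L12 (by decide)
  have hr : n % 5 = 0 ∨ n % 5 = 1 ∨ n % 5 = 2 ∨ n % 5 = 3 ∨ n % 5 = 4 := by omega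
  rcases hr with hr | hr | hr | hr | hr
  · -- n ≥ 10
    refine colorable_of_okSeq k n hk hn _
      (master (p := 5) (q := n - 5) (B := B5) (t := 0) (by norm_num) (by omega) (by omega) ?_ (by decide))
    rw [← ZMod.natCast_mod (n - 5) 5, show (n - 5) % 5 = 0 by omega]
    decide
  · -- n ≥ 11
    refine colorable_of_okSeq k n hk hn _
      (master (p := 7) (q := n - 7) (B := B72) (t := 2) (by norm_num) (by omega) (by omega) ?_ (by decide))
    rw [← ZMod.natCast_mod (n - 7) 5, show (n - 7) % 5 = 4 by omega]
    decide
  · -- n ≥ 17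
    refine colorable_of_okSeq k n hk hn _
      (master (p := 14) (q := n - 14) (B := B14) (t := 4) (by norm_num) (by omega) (by omega) ?_ (by decide))
    rw [← ZMod.natCast_mod (n - 14) 5, show (n - 14) % 5 = 3 by omega]
    decide
  · -- n ≥ 13
    refine colorable_of_okSeq k n hk hn _
      (master (p := 8) (q := n - 8) (B := B80) (t := 0) (by norm_num) (by omega) (by omega) ?_ (by decide))
    rw [← ZMod.natCast_mod (n - 8) 5, show (n - 8) % 5 = 0 by omega]
    decide
  · -- n ≥ 14
    refine colorable_of_okSeq k n hk hn _
      (master (p := 9) (q := n - 9) (B := B90) (t := 0) (by norm_num) (by omega) (by omega) ?_ (by decide))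
    rw [← ZMod.natCast_mod (n - 9) 5, show (n - 9) % 5 = 0 by omega]
    decide
end
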